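/- Let X ∈ ℝ^{d×n}, λ > 0, μ > 0, 0 < p, q < 2, and let (Z_t)_{t≥1} be a sequence in ℝ^{n×n} such that for every t, p·Z_{t+1}M_t + λq·Xᵀ(XZ_{t+1} − X)N_t = 0, where M_t = (Z_tᵀZ_t + μ²I)^{p/2−1} and N_t is the diagonal matrix with (N_t)_{ii} = (‖(XZ_t − X)_i‖_2² + μ²)^{q/2−1}. Then for every t, ‖Z_t‖_{S_p}^p ≤ Tr((Z_tᵀZ_t + μ²I)^{p/2}) ≤ J(Z_t, μ) ≤ J(Z_1, μ); consequently the sequence (Z_t) is bounded. -/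

import Mathlib

open Matrix

/-- Real power of a real symmetric matrix, defined through the spectral decomposition
`A = U · diag(λ₁,…,λₙ) · Uᵀ` as `A^r = U · diag(λ₁^r,…,λₙ^r) · Uᵀ`
(junk value `0` if `A` is not symmetric). -/
noncomputable def mpow {n : ℕ} (A : Matrix (Fin n) (Fin n) ℝ) (r : ℝ) :
    Matrix (Fin n) (Fin n) ℝ :=
  if hA : A.IsHermitian then hA.cfc (fun x : ℝ => x ^ r) else 0

/-- The smoothed LRR objective
`J(Z, μ) = Tr((ZᵀZ + μ²I)^{p/2}) + λ·∑ᵢ (‖(XZ − X)ᵢ‖₂² + μ²)^{q/2}`,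
where `(XZ − X)ᵢ` denotes the `i`-th column of `XZ − X`. -/
noncomputable def smoothJ {d n : ℕ} (X : Matrix (Fin d) (Fin n) ℝ) (lam p q : ℝ)
    (Z : Matrix (Fin n) (Fin n) ℝ) (μ : ℝ) : ℝ :=
  (mpow (Zᵀ * Z + μ ^ 2 • (1 : Matrix (Fin n) (Fin n) ℝ)) (p / 2)).trace +
    lam * ∑ i, (∑ j, ((X * Z - X) j i) ^ 2 + μ ^ 2) ^ (q / 2)


section helpers
variable {n : ℕ} {A B : Matrix (Fin n) (Fin n) ℝ}

lemma mpow_eq (hA : A.IsHermitian) (r : ℝ) : mpow A r = hA.cfc (fun x => x ^ r) :=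
  dif_pos hA

lemma row_sum_sq {P : Matrix (Fin n) (Fin n) ℝ} (hP : P ∈ Matrix.unitaryGroup (Fin n) ℝ)
    (i : Fin n) : ∑ j, (P i j) ^ 2 = 1 := by
  have h := (Matrix.mem_unitaryGroup_iff).mp hP
  have h2 := congrFun (congrFun (congrArg (fun M => (M : Matrix (Fin n) (Fin n) ℝ)) h) i) i
  simpa [Matrix.mul_apply, Matrix.star_apply, Matrix.one_apply, sq] using h2

lemma col_sum_sq {P : Matrix (Fin n) (Fin n) ℝ} (hP : P ∈ Matrix.unitaryGroup (Fin n) ℝ)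
    (j : Fin n) : ∑ i, (P i j) ^ 2 = 1 := by
  have h := (Matrix.mem_unitaryGroup_iff').mp hP
  have h2 := congrFun (congrFun (congrArg (fun M => (M : Matrix (Fin n) (Fin n) ℝ)) h) j) j
  simpa [Matrix.mul_apply, Matrix.star_apply, Matrix.one_apply, sq] using h2

lemma cfc_real (hA : A.IsHermitian) (f : ℝ → ℝ) :
    hA.cfc f = (hA.eigenvectorUnitary : Matrix (Fin n) (Fin n) ℝ) *
      diagonal (fun i => f (hA.eigenvalues i)) *
      star (hA.eigenvectorUnitary : Matrix (Fin n) (Fin n) ℝ) := by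
  rw [Matrix.IsHermitian.cfc]
  congr 2

lemma cfc_id_eq (hA : A.IsHermitian) : hA.cfc (fun x => x) = A := by
  rw [cfc_real]
  conv_rhs => rw [hA.spectral_theorem]
  congr 2

lemma trace_cfc (hA : A.IsHermitian) (f : ℝ → ℝ) :
    (hA.cfc f).trace = ∑ i, f (hA.eigenvalues i) := by
  rw [cfc_real, Matrix.trace_mul_cycle, Unitary.coe_star_mul_self, Matrix.one_mul]
  simp [Matrix.trace_diagonal]

lemma cfc_posSemidef (hA : A.IsHermitian) {f : ℝ → ℝ}
    (hf : ∀ i, 0 ≤ f (hA.eigenvalues i)) : (hA.cfc f).PosSemidef := by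
  rw [cfc_real]
  have h1 : (diagonal (fun i => f (hA.eigenvalues i))).PosSemidef :=
    Matrix.PosSemidef.diagonal hf
  simpa [Matrix.star_eq_conjTranspose] using
    h1.mul_mul_conjTranspose_same (hA.eigenvectorUnitary : Matrix (Fin n) (Fin n) ℝ)

lemma trace_diag_conj (c d : Fin n → ℝ) (P : Matrix (Fin n) (Fin n) ℝ) :
    (diagonal c * P * diagonal d * star P).trace
      = ∑ i, ∑ j, (P i j) ^ 2 * (c i * d j) := by
  have h1 : diagonal c * P * diagonal d = Matrix.of (fun i j => c i * P i j * d j) := by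
    ext i j
    simp [Matrix.diagonal_mul, Matrix.mul_diagonal]
  rw [h1]
  simp only [Matrix.trace, Matrix.diag, Matrix.mul_apply, Matrix.star_apply, star_trivial,
    Matrix.of_apply]
  congr 1; ext i; congr 1; ext j
  ring

lemma trace_cfc_mul_cfc (hA : A.IsHermitian) (hB : B.IsHermitian) (f g : ℝ → ℝ) :
    (hA.cfc f * hB.cfc g).trace =
      ∑ i, ∑ j, ((star (hA.eigenvectorUnitary : Matrix (Fin n) (Fin n) ℝ) *
          (hB.eigenvectorUnitary : Matrix (Fin n) (Fin n) ℝ)) i j) ^ 2 *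
        (f (hA.eigenvalues i) * g (hB.eigenvalues j)) := by
  set U := (hA.eigenvectorUnitary : Matrix (Fin n) (Fin n) ℝ)
  set V := (hB.eigenvectorUnitary : Matrix (Fin n) (Fin n) ℝ)
  set c := fun i => f (hA.eigenvalues i)
  set d := fun j => g (hB.eigenvalues j)
  set P := star U * V with hP
  have hUU : U * star U = 1 := by
    rw [← Unitary.coe_star]
    exact Unitary.coe_mul_star_self hA.eigenvectorUnitary
  have key : hA.cfc f * hB.cfc g = U * (diagonal c * P * diagonal d * star P) * star U := by
    rw [cfc_real, cfc_real, hP]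
    simp only [StarMul.star_mul, star_star, Matrix.mul_assoc, hUU, Matrix.mul_one]
    rfl
  rw [key, Matrix.trace_mul_cycle (U) _ (star U)]
  rw [Unitary.coe_star_mul_self, Matrix.one_mul]
  exact trace_diag_conj c d P

lemma star_mul_unitary_mem (hA : A.IsHermitian) (hB : B.IsHermitian) :
    (star (hA.eigenvectorUnitary : Matrix (Fin n) (Fin n) ℝ) *
      (hB.eigenvectorUnitary : Matrix (Fin n) (Fin n) ℝ)) ∈ Matrix.unitaryGroup (Fin n) ℝ := by
  have h := (star hA.eigenvectorUnitary * hB.eigenvectorUnitary).2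
  simpa [Unitary.coe_star] using h

lemma trace_cfc_mul_self (hA : A.IsHermitian) (f g : ℝ → ℝ) :
    (hA.cfc f * hA.cfc g).trace = ∑ i, f (hA.eigenvalues i) * g (hA.eigenvalues i) := by
  rw [trace_cfc_mul_cfc hA hA, Unitary.coe_star_mul_self]
  refine Finset.sum_congr rfl fun i _ => ?_
  rw [Finset.sum_eq_single i]
  · simp [Matrix.one_apply]
  · intro j _ hj
    simp [Matrix.one_apply, (Ne.symm hj)]
  · simp

lemma bern {a b r : ℝ} (ha : 0 < a) (hb : 0 ≤ b) (hr0 : 0 ≤ r) (hr1 : r ≤ 1) :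
    b ^ r ≤ a ^ r + r * a ^ (r - 1) * (b - a) := by
  have hs : (-1 : ℝ) ≤ b / a - 1 := by
    have : 0 ≤ b / a := div_nonneg hb ha.le
    linarith
  have h := rpow_one_add_le_one_add_mul_self hs hr0 hr1
  rw [add_sub_cancel] at h
  have har : (0:ℝ) < a ^ r := Real.rpow_pos_of_pos ha r
  have h2 : (b / a) ^ r * a ^ r ≤ (1 + r * (b / a - 1)) * a ^ r :=
    mul_le_mul_of_nonneg_right h har.le
  have h3 : (b / a) ^ r * a ^ r = b ^ r := by
    rw [Real.div_rpow hb ha.le, div_mul_cancel₀]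
    exact har.ne'
  have h4 : a ^ (r - 1) = a ^ r / a := by
    rw [Real.rpow_sub ha, Real.rpow_one]
  rw [h3] at h2
  rw [h4]
  calc b ^ r ≤ (1 + r * (b / a - 1)) * a ^ r := h2
    _ = a ^ r + r * (a ^ r / a) * (b - a) := by
        field_simp


variable {n : ℕ} {A B : Matrix (Fin n) (Fin n) ℝ}

lemma klein (hA : A.PosDef) (hB : B.PosSemidef) {r : ℝ} (hr0 : 0 < r) (hr1 : r < 1) :
    (mpow B r).trace ≤ (mpow A r).trace + r * ((mpow A (r - 1)) * (B - A)).trace := by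
  have hAh : A.IsHermitian := hA.1
  have hBh : B.IsHermitian := hB.1
  set a := hAh.eigenvalues with ha
  set b := hBh.eigenvalues with hb
  set P := star (hAh.eigenvectorUnitary : Matrix (Fin n) (Fin n) ℝ) *
    (hBh.eigenvectorUnitary : Matrix (Fin n) (Fin n) ℝ) with hPdef
  set c := fun i j => (P i j) ^ 2 with hc
  have hPmem : P ∈ Matrix.unitaryGroup (Fin n) ℝ := star_mul_unitary_mem hAh hBh
  have hrow : ∀ i, ∑ j, c i j = 1 := row_sum_sq hPmem
  have hcol : ∀ j, ∑ i, c i j = 1 := col_sum_sq hPmem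
  have hcnn : ∀ i j, 0 ≤ c i j := fun i j => sq_nonneg _
  have hai : ∀ i, 0 < a i := hA.eigenvalues_pos
  have hbj : ∀ j, 0 ≤ b j := hB.eigenvalues_nonneg
  have ea : (mpow A r).trace = ∑ i, a i ^ r := by rw [mpow_eq hAh, trace_cfc]
  have eb : (mpow B r).trace = ∑ j, b j ^ r := by rw [mpow_eq hBh, trace_cfc]
  have eAB : (mpow A (r - 1) * B).trace = ∑ i, ∑ j, c i j * (a i ^ (r - 1) * b j) := by
    have h := trace_cfc_mul_cfc hAh hBh (fun x => x ^ (r - 1)) (fun x => x)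
    rw [cfc_id_eq hBh] at h
    rw [mpow_eq hAh]
    exact h
  have eAA : (mpow A (r - 1) * A).trace = ∑ i, a i ^ (r - 1) * a i := by
    have h := trace_cfc_mul_self hAh (fun x => x ^ (r - 1)) (fun x => x)
    rw [cfc_id_eq hAh] at h
    rw [mpow_eq hAh]
    exact h
  have esub : (mpow A (r - 1) * (B - A)).trace
      = (mpow A (r - 1) * B).trace - (mpow A (r - 1) * A).trace := by
    rw [Matrix.mul_sub, Matrix.trace_sub]
  -- rewrite single sums as double sums
  have e1 : ∑ j, b j ^ r = ∑ i, ∑ j, c i j * b j ^ r := by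
    rw [Finset.sum_comm]
    refine Finset.sum_congr rfl fun j _ => ?_
    rw [← Finset.sum_mul, hcol j, one_mul]
  have e2 : ∑ i, a i ^ r = ∑ i, ∑ j, c i j * a i ^ r := by
    refine Finset.sum_congr rfl fun i _ => ?_
    rw [← Finset.sum_mul, hrow i, one_mul]
  have e3 : ∑ i, a i ^ (r - 1) * a i = ∑ i, ∑ j, c i j * (a i ^ (r - 1) * a i) := by
    refine Finset.sum_congr rfl fun i _ => ?_
    rw [← Finset.sum_mul, hrow i, one_mul]
  have key : ∑ i, ∑ j, c i j * b j ^ r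
      ≤ ∑ i, ∑ j, (c i j * a i ^ r
          + r * (c i j * (a i ^ (r - 1) * b j) - c i j * (a i ^ (r - 1) * a i))) := by
    refine Finset.sum_le_sum fun i _ => Finset.sum_le_sum fun j _ => ?_
    have hbound := bern (hai i) (hbj j) hr0.le hr1.le
    have := mul_le_mul_of_nonneg_left hbound (hcnn i j)
    nlinarith [this]
  have expand : ∑ i, ∑ j, (c i j * a i ^ r
          + r * (c i j * (a i ^ (r - 1) * b j) - c i j * (a i ^ (r - 1) * a i)))
      = (∑ i, ∑ j, c i j * a i ^ r)
        + r * ((∑ i, ∑ j, c i j * (a i ^ (r - 1) * b j))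
          - (∑ i, ∑ j, c i j * (a i ^ (r - 1) * a i))) := by
    simp only [Finset.sum_add_distrib, Finset.sum_sub_distrib, Finset.mul_sum, mul_sub]
  rw [eb, ea, esub, eAB, eAA, e1, e2, e3]
  calc ∑ i, ∑ j, c i j * b j ^ r
      ≤ ∑ i, ∑ j, (c i j * a i ^ r
          + r * (c i j * (a i ^ (r - 1) * b j) - c i j * (a i ^ (r - 1) * a i))) := key
    _ = _ := by rw [expand]

lemma psd_trace_nonneg {M : Matrix (Fin n) (Fin n) ℝ} (hM : M.PosSemidef) : 0 ≤ M.trace := by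
  rw [Matrix.trace]
  refine Finset.sum_nonneg fun i _ => ?_
  exact hM.diag_nonneg

lemma trace_quad_nonneg {M : Matrix (Fin n) (Fin n) ℝ} (hM : M.PosSemidef)
    (D : Matrix (Fin m) (Fin n) ℝ) : 0 ≤ (Dᵀ * D * M).trace := by
  have h1 : (D * M * Dᴴ).PosSemidef := hM.mul_mul_conjTranspose_same D
  rw [Matrix.conjTranspose_eq_transpose_of_trivial] at h1
  have h2 := psd_trace_nonneg h1
  rwa [Matrix.trace_mul_cycle] at h2

lemma trace_sym_swap {M : Matrix (Fin n) (Fin n) ℝ} (hM : Mᵀ = M)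
    (Y D : Matrix (Fin m) (Fin n) ℝ) : (Yᵀ * D * M).trace = (Dᵀ * Y * M).trace := by
  conv_lhs => rw [← Matrix.trace_transpose]
  rw [Matrix.transpose_mul, Matrix.transpose_mul, Matrix.transpose_transpose, hM,
    ← Matrix.mul_assoc]
  exact (Matrix.trace_mul_cycle M Dᵀ Y).trans (Matrix.trace_mul_cycle Y M Dᵀ)

lemma expand_trace (Y D : Matrix (Fin m) (Fin n) ℝ) {M : Matrix (Fin n) (Fin n) ℝ}
    (hM : Mᵀ = M) :
    ((Y + D)ᵀ * (Y + D) * M).trace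
      = (Yᵀ * Y * M).trace + 2 * (Dᵀ * (Y * M)).trace + (Dᵀ * D * M).trace := by
  have hs : (Yᵀ * D * M).trace = (Dᵀ * Y * M).trace := trace_sym_swap hM Y D
  have : (Y + D)ᵀ * (Y + D) * M
      = Yᵀ * Y * M + Yᵀ * D * M + Dᵀ * Y * M + Dᵀ * D * M := by
    rw [Matrix.transpose_add]
    simp only [Matrix.add_mul, Matrix.mul_add]
    abel
  rw [this, Matrix.trace_add, Matrix.trace_add, Matrix.trace_add, hs, ← Matrix.mul_assoc]
  ring

lemma trace_mul_diagonal (E : Matrix (Fin m) (Fin n) ℝ) (ν : Fin n → ℝ) :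
    (Eᵀ * E * Matrix.diagonal ν).trace = ∑ i, (∑ j, (E j i) ^ 2) * ν i := by
  simp only [Matrix.trace, Matrix.diag, Matrix.mul_diagonal, Matrix.mul_apply,
    Matrix.transpose_apply, sq, Matrix.diagonal_apply, mul_ite, mul_zero,
    Finset.sum_ite_eq, Finset.sum_ite_eq', Finset.mem_univ, if_true]

section descent
variable {d n : ℕ}

lemma smul_one_posDef {μ : ℝ} (hμ : 0 < μ) :
    (μ ^ 2 • (1 : Matrix (Fin n) (Fin n) ℝ)).PosDef := by
  have h : μ ^ 2 • (1 : Matrix (Fin n) (Fin n) ℝ) = Matrix.diagonal (fun _ => μ ^ 2) := by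
    ext i j
    by_cases hij : i = j <;> simp [Matrix.one_apply, Matrix.diagonal_apply, hij]
  rw [h]
  exact Matrix.PosDef.diagonal fun i => by positivity

lemma gram_psd (Z : Matrix (Fin d) (Fin n) ℝ) : (Zᵀ * Z).PosSemidef := by
  have h := Matrix.posSemidef_conjTranspose_mul_self Z
  rwa [Matrix.conjTranspose_eq_transpose_of_trivial] at h

set_option maxHeartbeats 1000000 in
lemma descent (X : Matrix (Fin d) (Fin n) ℝ) {lam p q μ : ℝ}
    (hlam : 0 < lam) (hμ : 0 < μ) (hp0 : 0 < p) (hp2 : p < 2) (hq0 : 0 < q) (hq2 : q < 2)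
    (Zc Zp : Matrix (Fin n) (Fin n) ℝ)
    (h : p • (Zp * mpow (Zcᵀ * Zc + μ ^ 2 • (1 : Matrix (Fin n) (Fin n) ℝ)) (p / 2 - 1)) +
      (lam * q) • (Xᵀ * ((X * Zp - X) *
        Matrix.diagonal fun i => (∑ j, ((X * Zc - X) j i) ^ 2 + μ ^ 2) ^ (q / 2 - 1))) = 0) :
    smoothJ X lam p q Zp μ ≤ smoothJ X lam p q Zc μ := by
  unfold smoothJ
  set Ac := Zcᵀ * Zc + μ ^ 2 • (1 : Matrix (Fin n) (Fin n) ℝ) with hAcdef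
  set Ap := Zpᵀ * Zp + μ ^ 2 • (1 : Matrix (Fin n) (Fin n) ℝ) with hApdef
  set Ec := X * Zc - X with hEcdef
  set Ep := X * Zp - X with hEpdef
  set sc : Fin n → ℝ := fun i => ∑ j, (Ec j i) ^ 2 with hscdef
  set sp : Fin n → ℝ := fun i => ∑ j, (Ep j i) ^ 2 with hspdef
  set ν : Fin n → ℝ := fun i => (sc i + μ ^ 2) ^ (q / 2 - 1) with hνdef
  set N := Matrix.diagonal ν with hNdef
  set M := mpow Ac (p / 2 - 1) with hMdef
  set D := Zc - Zp with hDdef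
  show (mpow Ap (p / 2)).trace + lam * ∑ i, (sp i + μ ^ 2) ^ (q / 2)
      ≤ (mpow Ac (p / 2)).trace + lam * ∑ i, (sc i + μ ^ 2) ^ (q / 2)
  -- positivity facts
  have hAc : Ac.PosDef := Matrix.PosDef.posSemidef_add (gram_psd Zc) (smul_one_posDef hμ)
  have hAp : Ap.PosSemidef :=
    (Matrix.PosDef.posSemidef_add (gram_psd Zp) (smul_one_posDef hμ)).posSemidef
  have hAch : Ac.IsHermitian := hAc.1
  have hr0 : (0 : ℝ) < p / 2 := by linarith
  have hr1 : p / 2 < 1 := by linarith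
  have hMpsd : M.PosSemidef := by
    rw [hMdef, mpow_eq hAch]
    exact cfc_posSemidef hAch fun i => Real.rpow_nonneg (hAc.eigenvalues_pos i).le _
  have hMsym : Mᵀ = M := by
    have h1 := hMpsd.1
    rwa [Matrix.IsHermitian, Matrix.conjTranspose_eq_transpose_of_trivial] at h1
  have hscnn : ∀ i, 0 ≤ sc i := fun i => Finset.sum_nonneg fun j _ => sq_nonneg _
  have hspnn : ∀ i, 0 ≤ sp i := fun i => Finset.sum_nonneg fun j _ => sq_nonneg _
  have hNsym : Nᵀ = N := Matrix.diagonal_transpose ν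
  have hNpsd : N.PosSemidef :=
    Matrix.PosSemidef.diagonal fun i => Real.rpow_nonneg (by positivity) _
  -- Klein step
  have klein1 := klein hAc hAp hr0 hr1
  -- decomposition
  have hZc : Zc = Zp + D := by rw [hDdef]; abel
  have hEc : Ec = Ep + X * D := by
    rw [hEcdef, hEpdef, hZc, Matrix.mul_add]
    abel
  have eT : (Zcᵀ * Zc * M).trace
      = (Zpᵀ * Zp * M).trace + 2 * (Dᵀ * (Zp * M)).trace + (Dᵀ * D * M).trace := by
    conv_lhs => rw [hZc]
    exact expand_trace Zp D hMsym
  have eS : (Ecᵀ * Ec * N).trace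
      = (Epᵀ * Ep * N).trace + 2 * ((X * D)ᵀ * (Ep * N)).trace
        + ((X * D)ᵀ * (X * D) * N).trace := by
    conv_lhs => rw [hEc]
    exact expand_trace Ep (X * D) hNsym
  -- inner Klein term
  have eInner : (M * (Ap - Ac)).trace = (Zpᵀ * Zp * M).trace - (Zcᵀ * Zc * M).trace := by
    have h1 : Ap - Ac = Zpᵀ * Zp - Zcᵀ * Zc := by rw [hApdef, hAcdef]; abel
    rw [h1, Matrix.mul_sub, Matrix.trace_sub, Matrix.trace_mul_comm M (Zpᵀ * Zp),
      Matrix.trace_mul_comm M (Zcᵀ * Zc), Matrix.mul_assoc, Matrix.mul_assoc]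
  -- q-side pointwise
  have htermq : ∀ i, (sp i + μ ^ 2) ^ (q / 2)
      ≤ (sc i + μ ^ 2) ^ (q / 2) + (q / 2) * ν i * (sp i - sc i) := by
    intro i
    have hb := bern (a := sc i + μ ^ 2) (b := sp i + μ ^ 2) (r := q / 2)
      (by have := hscnn i; positivity) (by have := hspnn i; positivity)
      (by linarith) (by linarith)
    have heq : (sp i + μ ^ 2) - (sc i + μ ^ 2) = sp i - sc i := by ring
    rw [heq] at hb
    exact hb
  have hqsum : ∑ i, (sp i + μ ^ 2) ^ (q / 2)
      ≤ ∑ i, (sc i + μ ^ 2) ^ (q / 2) + (q / 2) * (∑ i, ν i * (sp i - sc i)) := by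
    have h1 := Finset.sum_le_sum fun i (_ : i ∈ Finset.univ) => htermq i
    rw [Finset.sum_add_distrib] at h1
    have h2 : ∑ i, q / 2 * ν i * (sp i - sc i)
        = q / 2 * ∑ i, ν i * (sp i - sc i) := by
      rw [Finset.mul_sum]
      exact Finset.sum_congr rfl fun i _ => by ring
    rw [h2] at h1
    exact h1
  have hνs : ∑ i, ν i * (sp i - sc i) = (Epᵀ * Ep * N).trace - (Ecᵀ * Ec * N).trace := by
    rw [hNdef, trace_mul_diagonal, trace_mul_diagonal, ← Finset.sum_sub_distrib]
    refine Finset.sum_congr rfl fun i _ => ?_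
    ring
  -- gradient cross term
  have hcross : p * (Dᵀ * (Zp * M)).trace
      + (lam * q) * (Dᵀ * (Xᵀ * (Ep * N))).trace = 0 := by
    have h0 := congrArg (fun G => (Dᵀ * G).trace) h
    simp only [Matrix.mul_zero, Matrix.trace_zero, Matrix.mul_add, Matrix.mul_smul,
      Matrix.trace_add, Matrix.trace_smul, smul_eq_mul] at h0
    exact h0
  have hXD : (Dᵀ * (Xᵀ * (Ep * N))).trace = ((X * D)ᵀ * (Ep * N)).trace := by
    rw [Matrix.transpose_mul, Matrix.mul_assoc]
  rw [hXD] at hcross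
  -- nonnegativity
  have ht2 : 0 ≤ (Dᵀ * D * M).trace := trace_quad_nonneg hMpsd D
  have hu2 : 0 ≤ ((X * D)ᵀ * (X * D) * N).trace := trace_quad_nonneg hNpsd (X * D)
  -- assemble
  set t1 := (Dᵀ * (Zp * M)).trace with ht1def
  set t2 := (Dᵀ * D * M).trace with ht2def
  set u1 := ((X * D)ᵀ * (Ep * N)).trace with hu1def
  set u2 := ((X * D)ᵀ * (X * D) * N).trace with hu2def
  have ed : (Zpᵀ * Zp * M).trace - (Zcᵀ * Zc * M).trace = -(2 * t1 + t2) := by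
    rw [eT]; ring
  have k2 : (mpow Ap (p / 2)).trace
      ≤ (mpow Ac (p / 2)).trace + p / 2 * (-(2 * t1 + t2)) := by
    rw [eInner, ed] at klein1
    exact klein1
  have eu : (Epᵀ * Ep * N).trace - (Ecᵀ * Ec * N).trace = -(2 * u1 + u2) := by
    rw [eS]; ring
  rw [hνs, eu] at hqsum
  have hq3 : lam * (∑ i, (sp i + μ ^ 2) ^ (q / 2))
      ≤ lam * ((∑ i, (sc i + μ ^ 2) ^ (q / 2)) + q / 2 * (-(2 * u1 + u2))) :=
    mul_le_mul_of_nonneg_left hqsum hlam.le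
  have hpos : 0 ≤ p / 2 * t2 + lam * (q / 2) * u2 :=
    add_nonneg (mul_nonneg (by linarith) ht2)
      (mul_nonneg (mul_nonneg hlam.le (by linarith)) hu2)
  have hstep : p / 2 * (-(2 * t1 + t2)) + lam * ((∑ i, (sc i + μ ^ 2) ^ (q / 2))
        + q / 2 * (-(2 * u1 + u2)))
      ≤ lam * ∑ i, (sc i + μ ^ 2) ^ (q / 2) := by
    have e0 : p / 2 * (-(2 * t1 + t2)) + lam * ((∑ i, (sc i + μ ^ 2) ^ (q / 2))
          + q / 2 * (-(2 * u1 + u2)))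
        = lam * (∑ i, (sc i + μ ^ 2) ^ (q / 2))
          - (p * t1 + lam * q * u1) - (p / 2 * t2 + lam * (q / 2) * u2) := by
      ring
    rw [e0, hcross]
    linarith
  calc (mpow Ap (p / 2)).trace + lam * ∑ i, (sp i + μ ^ 2) ^ (q / 2)
      ≤ ((mpow Ac (p / 2)).trace + p / 2 * (-(2 * t1 + t2)))
        + lam * ((∑ i, (sc i + μ ^ 2) ^ (q / 2)) + q / 2 * (-(2 * u1 + u2))) :=
        add_le_add k2 hq3
    _ ≤ (mpow Ac (p / 2)).trace + lam * ∑ i, (sc i + μ ^ 2) ^ (q / 2) := by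
        have := hstep
        linarith
end descent

section main
variable {d n : ℕ}

lemma psd_diag_nonneg {M : Matrix (Fin n) (Fin n) ℝ} (hM : M.PosSemidef) (i : Fin n) :
    0 ≤ M i i := by
  exact hM.diag_nonneg

lemma mpow_shift_le (Zt : Matrix (Fin n) (Fin n) ℝ) {p μ : ℝ} (hμ : 0 < μ)
    (hp0 : 0 < p) (hp2 : p < 2) :
    (mpow (Ztᵀ * Zt) (p / 2)).trace
      ≤ (mpow (Ztᵀ * Zt + μ ^ 2 • (1 : Matrix (Fin n) (Fin n) ℝ)) (p / 2)).trace := by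
  set A := Ztᵀ * Zt + μ ^ 2 • (1 : Matrix (Fin n) (Fin n) ℝ) with hAdef
  have hA : A.PosDef := Matrix.PosDef.posSemidef_add (gram_psd Zt) (smul_one_posDef hμ)
  have hAh : A.IsHermitian := hA.1
  have hr0 : (0 : ℝ) < p / 2 := by linarith
  have hr1 : p / 2 < 1 := by linarith
  have k := klein hA (gram_psd Zt) hr0 hr1
  have hsub : Ztᵀ * Zt - A = -(μ ^ 2 • (1 : Matrix (Fin n) (Fin n) ℝ)) := by
    rw [hAdef]; abel
  have hMpsd : (mpow A (p / 2 - 1)).PosSemidef := by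
    rw [mpow_eq hAh]
    exact cfc_posSemidef hAh fun i => Real.rpow_nonneg (hA.eigenvalues_pos i).le _
  have hMtr : 0 ≤ (mpow A (p / 2 - 1)).trace := psd_trace_nonneg hMpsd
  have hin : (mpow A (p / 2 - 1) * (Ztᵀ * Zt - A)).trace
      = -(μ ^ 2 * (mpow A (p / 2 - 1)).trace) := by
    rw [hsub, Matrix.mul_neg, Matrix.trace_neg, Matrix.mul_smul, Matrix.mul_one,
      Matrix.trace_smul, smul_eq_mul]
  rw [hin] at k
  have : 0 ≤ p / 2 * (μ ^ 2 * (mpow A (p / 2 - 1)).trace) :=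
    mul_nonneg (by linarith) (mul_nonneg (by positivity) hMtr)
  linarith

theorem stmt_13x (X : Matrix (Fin d) (Fin n) ℝ) (lam p q μ : ℝ)
    (hlam : 0 < lam) (hμ : 0 < μ) (hp0 : 0 < p) (hp2 : p < 2) (hq0 : 0 < q) (hq2 : q < 2)
    (Z : ℕ → Matrix (Fin n) (Fin n) ℝ)
    (hupd : ∀ t, p • (Z (t + 1) *
        mpow ((Z t)ᵀ * Z t + μ ^ 2 • (1 : Matrix (Fin n) (Fin n) ℝ)) (p / 2 - 1)) +
      (lam * q) • (Xᵀ * ((X * Z (t + 1) - X) *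
        Matrix.diagonal fun i => (∑ j, ((X * Z t - X) j i) ^ 2 + μ ^ 2) ^ (q / 2 - 1))) = 0) :
    (∀ t, (mpow ((Z t)ᵀ * Z t) (p / 2)).trace ≤
          (mpow ((Z t)ᵀ * Z t + μ ^ 2 • (1 : Matrix (Fin n) (Fin n) ℝ)) (p / 2)).trace ∧
        (mpow ((Z t)ᵀ * Z t + μ ^ 2 • (1 : Matrix (Fin n) (Fin n) ℝ)) (p / 2)).trace ≤
          smoothJ X lam p q (Z t) μ ∧
        smoothJ X lam p q (Z t) μ ≤ smoothJ X lam p q (Z 0) μ) ∧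
      ∃ C : ℝ, ∀ t, ∀ i j, |Z t i j| ≤ C := by
  have hmono : ∀ t, smoothJ X lam p q (Z t) μ ≤ smoothJ X lam p q (Z 0) μ := by
    intro t
    induction t with
    | zero => exact le_refl _
    | succ t ih =>
      exact (descent X hlam hμ hp0 hp2 hq0 hq2 (Z t) (Z (t + 1)) (hupd t)).trans ih
  have h2 : ∀ t, (mpow ((Z t)ᵀ * Z t + μ ^ 2 • (1 : Matrix (Fin n) (Fin n) ℝ)) (p / 2)).trace ≤
      smoothJ X lam p q (Z t) μ := by
    intro t
    unfold smoothJ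
    have hs : 0 ≤ lam * ∑ i, (∑ j, ((X * Z t - X) j i) ^ 2 + μ ^ 2) ^ (q / 2) := by
      refine mul_nonneg hlam.le (Finset.sum_nonneg fun i _ => Real.rpow_nonneg ?_ _)
      have : 0 ≤ ∑ j, ((X * Z t - X) j i) ^ 2 :=
        Finset.sum_nonneg fun j _ => sq_nonneg _
      positivity
    linarith
  set B := smoothJ X lam p q (Z 0) μ with hBdef
  refine ⟨fun t => ⟨mpow_shift_le (Z t) hμ hp0 hp2, h2 t, hmono t⟩,
    Real.sqrt (n * B ^ ((2 : ℝ) / p)), fun t i j => ?_⟩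
  set Zt := Z t with hZtdef
  set A := Ztᵀ * Zt + μ ^ 2 • (1 : Matrix (Fin n) (Fin n) ℝ) with hAdef
  have hA : A.PosDef := Matrix.PosDef.posSemidef_add (gram_psd Zt) (smul_one_posDef hμ)
  have hAh : A.IsHermitian := hA.1
  have htrB : (mpow A (p / 2)).trace ≤ B := (h2 t).trans (hmono t)
  have etr : (mpow A (p / 2)).trace = ∑ k, hAh.eigenvalues k ^ (p / 2) := by
    rw [mpow_eq hAh, trace_cfc]
  have heig : ∀ k, hAh.eigenvalues k ≤ B ^ ((2 : ℝ) / p) := by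
    intro k
    have h1 : hAh.eigenvalues k ^ (p / 2) ≤ B := by
      refine le_trans ?_ htrB
      rw [etr]
      exact Finset.single_le_sum
        (fun m _ => Real.rpow_nonneg (hA.eigenvalues_pos m).le _) (Finset.mem_univ k)
    have he : hAh.eigenvalues k = (hAh.eigenvalues k ^ (p / 2)) ^ ((2 : ℝ) / p) := by
      rw [← Real.rpow_mul (hA.eigenvalues_pos k).le]
      rw [show p / 2 * (2 / p) = 1 by field_simp, Real.rpow_one]
    rw [he]
    exact Real.rpow_le_rpow (Real.rpow_nonneg (hA.eigenvalues_pos k).le _) h1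
      (by positivity)
  have htrA : A.trace = ∑ k, hAh.eigenvalues k := by
    conv_lhs => rw [← cfc_id_eq hAh]
    rw [trace_cfc]
  have hAtr_le : A.trace ≤ n * B ^ ((2 : ℝ) / p) := by
    rw [htrA]
    calc ∑ k, hAh.eigenvalues k ≤ ∑ _k : Fin n, B ^ ((2 : ℝ) / p) :=
          Finset.sum_le_sum fun k _ => heig k
      _ = n * B ^ ((2 : ℝ) / p) := by
          rw [Finset.sum_const, Finset.card_univ, Fintype.card_fin, nsmul_eq_mul]
  have hAjj : A j j ≤ A.trace := by
    rw [Matrix.trace]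
    exact Finset.single_le_sum (fun k _ => psd_diag_nonneg hA.posSemidef k)
      (Finset.mem_univ j)
  have hsq : (Zt i j) ^ 2 ≤ A j j := by
    have h1 : (Ztᵀ * Zt) j j = ∑ k, (Zt k j) ^ 2 := by
      simp [Matrix.mul_apply, Matrix.transpose_apply, sq]
    have h2 : (Zt i j) ^ 2 ≤ (Ztᵀ * Zt) j j := by
      rw [h1]
      exact Finset.single_le_sum (f := fun k => (Zt k j) ^ 2)
        (fun k _ => sq_nonneg _) (Finset.mem_univ i)
    have h3 : A j j = (Ztᵀ * Zt) j j + μ ^ 2 := by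
      simp [hAdef, Matrix.add_apply, Matrix.smul_apply, Matrix.one_apply]
    nlinarith [sq_nonneg μ]
  have hfin : (Zt i j) ^ 2 ≤ n * B ^ ((2 : ℝ) / p) := by linarith
  rw [← Real.sqrt_sq_eq_abs]
  exact Real.sqrt_le_sqrt hfin
end main

/-- **Theorem 3 (2): boundedness.** If the sequence `(Z_t)` satisfies the IRLS update equation
`p·Z_{t+1}·M_t + λq·Xᵀ(XZ_{t+1} − X)·N_t = 0` for every `t`, then for every `t`
`‖Z_t‖_{S_p}^p = Tr((Z_tᵀZ_t)^{p/2}) ≤ Tr((Z_tᵀZ_t + μ²I)^{p/2}) ≤ J(Z_t, μ) ≤ J(Z_1, μ)`,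
and consequently the sequence `(Z_t)` is bounded (entrywise, by some constant `C`). -/
theorem stmt_13 {d n : ℕ} (X : Matrix (Fin d) (Fin n) ℝ) (lam p q μ : ℝ)
    (hlam : 0 < lam) (hμ : 0 < μ) (hp0 : 0 < p) (hp2 : p < 2) (hq0 : 0 < q) (hq2 : q < 2)
    (Z : ℕ → Matrix (Fin n) (Fin n) ℝ)
    (hupd : ∀ t, p • (Z (t + 1) *
        mpow ((Z t)ᵀ * Z t + μ ^ 2 • (1 : Matrix (Fin n) (Fin n) ℝ)) (p / 2 - 1)) +
      (lam * q) • (Xᵀ * ((X * Z (t + 1) - X) *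
        Matrix.diagonal fun i => (∑ j, ((X * Z t - X) j i) ^ 2 + μ ^ 2) ^ (q / 2 - 1))) = 0) :
    (∀ t, (mpow ((Z t)ᵀ * Z t) (p / 2)).trace ≤
          (mpow ((Z t)ᵀ * Z t + μ ^ 2 • (1 : Matrix (Fin n) (Fin n) ℝ)) (p / 2)).trace ∧
        (mpow ((Z t)ᵀ * Z t + μ ^ 2 • (1 : Matrix (Fin n) (Fin n) ℝ)) (p / 2)).trace ≤
          smoothJ X lam p q (Z t) μ ∧
        smoothJ X lam p q (Z t) μ ≤ smoothJ X lam p q (Z 0) μ) ∧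
      ∃ C : ℝ, ∀ t, ∀ i j, |Z t i j| ≤ C := by
  exact stmt_13x X lam p q μ hlam hμ hp0 hp2 hq0 hq2 Z hupd
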